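/- For all integers k ≥ 1, r ≥ 2 and j ≥ 0, the following identity of rational numbers holds: ∏_{i=1}^{k} C(r+i+j-2, r-1) / C(r+i-2, r-1) = Σ_{l=0}^{j} C(k(r-1)+j-l, k(r-1)) · N_k(r-1, l), where N_k(r-1, l) = Σ_{m=0}^{l} (-1)^{l-m} C(k(r-1)+1, l-m) ∏_{i=0}^{k-1} C(r-1+i+m, r-1) / C(r-1+i, r-1). (This expresses the multiset k-Narayana numbers as a binomially weighted sum of the k-Narayana numbers.) -/

import Mathlib

lemma coeff_one_sub_X_pow (d q : ℕ) :
    (PowerSeries.coeff (R := ℚ) q) ((1 - PowerSeries.X) ^ d) = (-1) ^ q * (d.choose q : ℚ) := by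
  induction d generalizing q with
  | zero =>
    rw [pow_zero, PowerSeries.coeff_one]
    cases q <;> simp
  | succ d ih =>
    rw [pow_succ, mul_sub, mul_one, map_sub]
    cases q with
    | zero => simp [ih]
    | succ q =>
      rw [PowerSeries.coeff_succ_mul_X, ih, ih, Nat.choose_succ_succ']
      push_cast
      ring

lemma key (n N : ℕ) :
    (∑ t ∈ Finset.range (N + 1),
        (-1 : ℚ) ^ t * ((n + 1).choose t : ℚ) * ((n + (N - t)).choose n : ℚ)) =
      if N = 0 then 1 else 0 := by
  have h := (PowerSeries.invOneSubPow ℚ (n + 1)).inv_val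
  rw [PowerSeries.invOneSubPow_inv_eq_one_sub_pow,
    PowerSeries.invOneSubPow_val_succ_eq_mk_add_choose] at h
  have h2 := congrArg (PowerSeries.coeff (R := ℚ) N) h
  rw [PowerSeries.coeff_mul, PowerSeries.coeff_one,
    Finset.Nat.sum_antidiagonal_eq_sum_range_succ_mk] at h2
  rw [← h2]
  refine Finset.sum_congr rfl fun t ht => ?_
  rw [coeff_one_sub_X_pow]
  simp

/-- The (Sulanke) `k`-Narayana number
`N_k(s,l) = Σ_{m=0}^{l} (-1)^{l-m} C(ks+1, l-m) ∏_{i=0}^{k-1} C(s+i+m, s)/C(s+i, s)`. -/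
def Nar (k s l : ℕ) : ℚ :=
  ∑ m ∈ Finset.range (l + 1), (-1) ^ (l - m) * ((k * s + 1).choose (l - m) : ℚ) *
    ∏ i ∈ Finset.range k, ((s + i + m).choose s : ℚ) / ((s + i).choose s : ℚ)

/-- The multiset `k`-Narayana number `𝔑_k(r,j) = ∏_{i=1}^{k} C(r+i+j-2, r-1)/C(r+i-2, r-1)`
equals `Σ_{l=0}^{j} C(k(r-1)+j-l, k(r-1)) · N_k(r-1, l)`.
The product below runs over `0`-based `i ∈ Finset.range k`. -/
theorem stmt5 (k r j : ℕ) (hk : 1 ≤ k) (hr : 2 ≤ r) :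
    (∏ i ∈ Finset.range k,
        ((r - 1 + i + j).choose (r - 1) : ℚ) / ((r - 1 + i).choose (r - 1) : ℚ)) =
      ∑ l ∈ Finset.range (j + 1),
        ((k * (r - 1) + j - l).choose (k * (r - 1)) : ℚ) * Nar k (r - 1) l := by
  set s := r - 1 with hs
  set n := k * s with hn
  set f : ℕ → ℚ := fun m =>
    ∏ i ∈ Finset.range k, ((s + i + m).choose s : ℚ) / ((s + i).choose s : ℚ) with hf
  calc f j
      = ∑ m ∈ Finset.range (j+1), (if m = j then f m else 0) := by
        rw [Finset.sum_ite_eq' (Finset.range (j+1)) j f, if_pos (Finset.self_mem_range_succ j)]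
    _ = ∑ m ∈ Finset.range (j+1), ∑ l ∈ Finset.Ico m (j+1),
          ((n + j - l).choose n : ℚ) * ((-1)^(l-m) * ((n+1).choose (l-m) : ℚ) * f m) := by
        refine Finset.sum_congr rfl fun m hm => ?_
        rw [Finset.mem_range] at hm
        have hm' : m ≤ j := by omega
        rw [Finset.sum_Ico_eq_sum_range]
        have hjm : j + 1 - m = (j - m) + 1 := by omega
        rw [hjm]
        have hterm : ∀ t ∈ Finset.range ((j-m)+1),
            ((n + j - (m + t)).choose n : ℚ) *
              ((-1)^(m+t-m) * ((n+1).choose (m+t-m) : ℚ) * f m)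
            = ((-1:ℚ)^t * ((n+1).choose t : ℚ) * ((n + ((j-m) - t)).choose n : ℚ)) * f m := by
          intro t ht
          rw [Finset.mem_range] at ht
          have h1 : m + t - m = t := by omega
          have h2 : n + j - (m + t) = n + ((j - m) - t) := by omega
          rw [h1, h2]; ring
        rw [Finset.sum_congr rfl hterm, ← Finset.sum_mul, key n (j - m)]
        by_cases hmj : m = j
        · simp [hmj]
        · have h0 : j - m ≠ 0 := by omega
          simp [hmj, h0]
    _ = ∑ l ∈ Finset.range (j+1), ∑ m ∈ Finset.range (l+1),
          ((n + j - l).choose n : ℚ) * ((-1)^(l-m) * ((n+1).choose (l-m) : ℚ) * f m) := by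
        simp_rw [Finset.range_eq_Ico]
        exact Finset.sum_Ico_Ico_comm 0 (j+1) _
    _ = ∑ l ∈ Finset.range (j + 1),
        ((n + j - l).choose n : ℚ) * Nar k s l := by
        simp only [Nar, Finset.mul_sum, hf, ← hn]
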